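/- For any non-separable even list L, the binary relation ≤_L on [n] defined by i ≤_L j iff (i ≤ j and l_{ij} = 0) is a partial order. -/
import Mathlib


open Finset

/-- Two permutations are adjacent if every element's position changes by at most one. -/
def Adjacent {n : ℕ} (π σ : Equiv.Perm (Fin n)) : Prop :=
  ∀ i, ((π i : ℤ) - (σ i : ℤ)).natAbs ≤ 1

/-- Number of times wires `i` and `j` swap in the sequence `T` of height `h`. -/
def SwapCount {n : ℕ} (T : ℕ → Equiv.Perm (Fin n)) (h : ℕ) (i j : Fin n) : ℕ :=
  ((Finset.range (h - 1)).filter fun t => T t i = T (t+1) j ∧ T t j = T (t+1) i).card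

/-- A tangle of height `h`: a nonempty sequence of permutations with consecutive ones adjacent. -/
def IsTangle {n : ℕ} (T : ℕ → Equiv.Perm (Fin n)) (h : ℕ) : Prop :=
  1 ≤ h ∧ ∀ t, t + 1 < h → Adjacent (T t) (T (t+1))

/-- A tangle starting at the identity realizing the list `l`. -/
def Realizes {n : ℕ} (T : ℕ → Equiv.Perm (Fin n)) (h : ℕ) (l : Fin n → Fin n → ℕ) : Prop :=
  IsTangle T h ∧ T 0 = 1 ∧ ∀ i j, i ≠ j → SwapCount T h i j = l i j

/-- A list is feasible if some tangle starting at the identity realizes it. -/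
def Feasible {n : ℕ} (l : Fin n → Fin n → ℕ) : Prop :=
  ∃ h T, Realizes T h l

/-- A list is consistent if the map `id_n L` is a permutation of `[n]`. -/
def Consistent {n : ℕ} (l : Fin n → Fin n → ℕ) : Prop :=
  ∃ ρ : Equiv.Perm (Fin n), ∀ i : Fin n,
    ((i : ℤ) + ((Finset.univ.filter fun j => i < j ∧ Odd (l i j)).card : ℤ)
      - ((Finset.univ.filter fun j => j < i ∧ Odd (l i j)).card : ℤ)) = (ρ i : ℤ)

/-- For a non-separable even list, the relation i ≤_L j ↔ (i ≤ j ∧ l i j = 0)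
    is a partial order. -/
theorem leL_partial_order (n : ℕ) (l : Fin n → Fin n → ℕ)
    (hsym : ∀ i j, l i j = l j i) (hdiag : ∀ i, l i i = 0)
    (heven : ∀ i j, Even (l i j))
    (hns : ∀ i j k : Fin n, i < j → j < k → 0 < l i k → 0 < l i j ∨ 0 < l j k) :
    (∀ i : Fin n, i ≤ i ∧ l i i = 0) ∧
    (∀ i j : Fin n, (i ≤ j ∧ l i j = 0) → (j ≤ i ∧ l j i = 0) → i = j) ∧
    (∀ i j k : Fin n, (i ≤ j ∧ l i j = 0) → (j ≤ k ∧ l j k = 0) →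
      (i ≤ k ∧ l i k = 0)) := by
  refine ⟨fun i => ⟨le_refl i, hdiag i⟩, fun i j h1 h2 => le_antisymm h1.1 h2.1,
    fun i j k h1 h2 => ⟨le_trans h1.1 h2.1, ?_⟩⟩
  rcases eq_or_lt_of_le h1.1 with rfl | hij
  · exact h2.2
  rcases eq_or_lt_of_le h2.1 with rfl | hjk
  · exact h1.2
  by_contra hne
  rcases hns i j k hij hjk (Nat.pos_of_ne_zero hne) with h | h
  · omega
  · omega
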